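/- For any n×n matrix y, any column vector ξ ∈ M_{n,1}(ℂ), any row vector v* ∈ M_{1,n}(ℂ), and 0 ≤ k ≤ n-1, one has B_k(y + ξ v*)·ξ = B_k(y)·ξ. -/

import Mathlib

open Matrix BigOperators

/-- The signed coefficients of the characteristic polynomial:
`det (t•I - x) = t^n - p 1 x * t^(n-1) - ⋯ - p n x`. -/
noncomputable def charCoeff (n : ℕ) (k : ℕ) (x : Matrix (Fin n) (Fin n) ℂ) : ℂ :=
  -(x.charpoly.coeff (n - k))

/-- `B n k x = x^k - p 1 x • x^(k-1) - ⋯ - p k x • I`. -/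
noncomputable def gradB (n : ℕ) (k : ℕ) (x : Matrix (Fin n) (Fin n) ℂ) :
    Matrix (Fin n) (Fin n) ℂ :=
  x ^ k - ∑ i ∈ Finset.Icc 1 k, charCoeff n i x • x ^ (k - i)

open Polynomial in
/-- Rank-one update does not change `adjugate A *ᵥ u` in the direction `u`. -/
lemma adj_rank_one {R : Type*} [CommRing R] {m : Type*} [DecidableEq m] [Fintype m]
    (A : Matrix m m R) (u v : m → R) :
    adjugate (A + replicateCol (Fin 1) u * replicateRow (Fin 1) v) *ᵥ u = adjugate A *ᵥ u := by
  rw [← cramer_eq_adjugate_mulVec, ← cramer_eq_adjugate_mulVec]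
  ext i
  rw [cramer_apply, cramer_apply]
  have key : (A + replicateCol (Fin 1) u * replicateRow (Fin 1) v).updateCol i u =
      (A.updateCol i u) *
        (1 + replicateCol (Fin 1) (Pi.single i (1 : R)) * replicateRow (Fin 1) (Function.update v i 0)) := by
    ext a b
    rw [Matrix.mul_add, Matrix.mul_one]
    by_cases h : b = i
    · subst h
      simp [updateCol_apply, mul_apply, Pi.single_apply, Function.update_apply]
    · simp [updateCol_apply, mul_apply, Pi.single_apply, Function.update_apply, h,
        Finset.sum_ite_eq', mul_assoc]
  rw [key, det_mul]; erw [det_one_add_replicateCol_mul_replicateRow]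
  simp [dotProduct, Pi.single_apply, Function.update_apply, Finset.sum_ite_eq']

open Polynomial in
/-- The entries of the adjugate of the characteristic matrix have degree `< n`. -/
lemma coeff_adj_charmatrix {n : ℕ} (x : Matrix (Fin n) (Fin n) ℂ) (i j : Fin n) :
    (adjugate (charmatrix x) i j).coeff n = 0 := by
  have hn : 0 < n := i.pos
  rw [adjugate_apply, det_apply, finset_sum_coeff]
  refine Finset.sum_eq_zero fun σ _ => ?_
  rw [coeff_smul]
  have hd : (∏ k, (charmatrix x).updateRow j (Pi.single i 1) (σ k) k).natDegree < n := by
    refine lt_of_le_of_lt (le_trans (natDegree_prod_le _ _) ?_) (Nat.sub_lt hn one_pos)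
    set d : Fin n → ℕ := fun k => ((charmatrix x).updateRow j (Pi.single i 1) (σ k) k).natDegree
    have h0 : d (σ⁻¹ j) = 0 := by
      have : σ (σ⁻¹ j) = j := Equiv.apply_symm_apply σ j
      simp only [d, this, updateRow_self]
      rcases eq_or_ne i (σ⁻¹ j) with h | h
      · subst h; simp
      · simp [Pi.single_apply, (Ne.symm h)]; split_ifs <;> simp
    calc ∑ k, d k = ∑ k ∈ Finset.univ.erase (σ⁻¹ j), d k :=
          (Finset.sum_erase _ h0).symm
      _ ≤ (Finset.univ.erase (σ⁻¹ j)).card • 1 := by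
          refine Finset.sum_le_card_nsmul _ _ 1 fun k hk => ?_
          have hkj : σ k ≠ j := by
            intro h
            exact (Finset.mem_erase.mp hk).1 (by simp [← h])
          simp only [d, updateRow_ne hkj]
          exact le_trans (charmatrix_apply_natDegree_le _ _) (by split_ifs <;> simp)
      _ ≤ n - 1 := by
          simp [Finset.card_erase_of_mem, Finset.card_univ]
  rw [coeff_eq_zero_of_natDegree_lt hd, smul_zero]

lemma gradB_succ (n k : ℕ) (x : Matrix (Fin n) (Fin n) ℂ) :
    gradB n (k+1) x = x * gradB n k x - charCoeff n (k+1) x • 1 := by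
  unfold gradB
  rw [Finset.sum_Icc_succ_top (by omega : 1 ≤ k+1), mul_sub, Finset.mul_sum]
  have h1 : ∑ i ∈ Finset.Icc 1 k, x * (charCoeff n i x • x ^ (k - i)) =
      ∑ i ∈ Finset.Icc 1 k, charCoeff n i x • x ^ (k + 1 - i) := by
    refine Finset.sum_congr rfl fun i hi => ?_
    have : k + 1 - i = (k - i) + 1 := by
      have := (Finset.mem_Icc.mp hi).2; omega
    rw [this, mul_smul_comm, pow_succ']
  rw [h1, ← pow_succ']
  have h2 : k + 1 - (k + 1) = 0 := by omega
  rw [h2, pow_zero]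
  abel

open Polynomial in
lemma coeff_eqn {n : ℕ} (x : Matrix (Fin n) (Fin n) ℂ) (m : ℕ) :
    (matPolyEquiv (adjugate (charmatrix x))).coeff m =
      x * (matPolyEquiv (adjugate (charmatrix x))).coeff (m+1)
        + (x.charpoly.coeff (m+1)) • (1 : Matrix (Fin n) (Fin n) ℂ) := by
  have h : charmatrix x * adjugate (charmatrix x) = x.charpoly • 1 := by
    rw [mul_adjugate]; rfl
  have h2 := congrArg matPolyEquiv h
  rw [_root_.map_mul, matPolyEquiv_charmatrix, matPolyEquiv_smul_one] at h2
  have h3 := congrArg (fun p => Polynomial.coeff p (m+1)) h2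
  simp only [sub_mul, coeff_sub, coeff_X_mul, coeff_C_mul, coeff_map,
    Algebra.algebraMap_eq_smul_one] at h3
  rw [sub_eq_iff_eq_add] at h3
  rw [h3]; abel

open Polynomial in
lemma gradB_eq_coeff {n : ℕ} (hn : 0 < n) (x : Matrix (Fin n) (Fin n) ℂ) (k : ℕ)
    (hk : k ≤ n - 1) :
    gradB n k x = (matPolyEquiv (adjugate (charmatrix x))).coeff (n - 1 - k) := by
  induction k with
  | zero =>
    have h := coeff_eqn x (n-1)
    have hn1 : n - 1 + 1 = n := Nat.succ_pred_eq_of_pos hn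
    rw [hn1] at h
    have hM : (matPolyEquiv (adjugate (charmatrix x))).coeff n = 0 := by
      ext i j
      rw [matPolyEquiv_coeff_apply]
      exact coeff_adj_charmatrix x i j
    have hc : x.charpoly.coeff n = 1 := by
      have := (charpoly_monic x).coeff_natDegree
      rwa [charpoly_natDegree_eq_dim, Fintype.card_fin] at this
    rw [hM, hc, mul_zero, zero_add, one_smul] at h
    simp only [Nat.sub_zero, gradB, pow_zero]
    rw [← h]
    simp
  | succ k ih =>
    have hk' : k ≤ n - 1 := by omega
    have ih' := ih hk'
    have h := coeff_eqn x (n - 1 - (k+1))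
    have he : n - 1 - (k+1) + 1 = n - 1 - k := by omega
    rw [he, ← ih'] at h
    have he2 : n - 1 - k = n - (k+1) := by omega
    rw [he2] at h
    rw [gradB_succ, h, charCoeff]
    simp only [neg_smul, sub_neg_eq_add]

/--  for a rank-one perturbation. -/
theorem stmt4 (n : ℕ) (k : ℕ) (hk : k ≤ n - 1) (y : Matrix (Fin n) (Fin n) ℂ)
    (xi : Matrix (Fin n) (Fin 1) ℂ) (vstar : Matrix (Fin 1) (Fin n) ℂ) :
    gradB n k (y + xi * vstar) * xi = gradB n k y * xi := by
  rcases Nat.eq_zero_or_pos n with h | hn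
  · subst h
    ext i j
    exact i.elim0
  classical
  set u : Fin n → Polynomial ℂ := fun l => Polynomial.C (xi l 0) with hu
  set v : Fin n → Polynomial ℂ := fun l => -Polynomial.C (vstar 0 l) with hv
  have hch : charmatrix (y + xi * vstar) = charmatrix y + replicateCol (Fin 1) u * replicateRow (Fin 1) v := by
    ext a b : 2
    simp only [charmatrix_apply, Matrix.add_apply, mul_apply, replicateCol_apply, replicateRow_apply, hu, hv,
      Fin.sum_univ_one, map_add, _root_.map_mul]
    ring
  have hA : adjugate (charmatrix (y + xi * vstar)) *ᵥ u = adjugate (charmatrix y) *ᵥ u := by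
    rw [hch]
    exact adj_rank_one (charmatrix y) u v
  have key : ∀ x : Matrix (Fin n) (Fin n) ℂ, ∀ a : Fin n,
      (gradB n k x * xi) a 0 = ((adjugate (charmatrix x) *ᵥ u) a).coeff (n - 1 - k) := by
    intro x a
    rw [gradB_eq_coeff hn x k hk]
    simp only [mul_apply, mulVec, dotProduct, Polynomial.finset_sum_coeff, hu,
      Polynomial.coeff_mul_C, matPolyEquiv_coeff_apply, Fin.sum_univ_one]
  ext a b
  have hb : b = 0 := Subsingleton.elim b 0
  subst hb
  rw [key, key, hA]
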